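/- Conditional convergence of momentum Frank–Wolfe with uniformly bounded gradient-surrogate error (deterministic skeleton of the Acc-SZOFW analysis): let T ≥ 2 be an integer, and suppose there is κ ≥ 0 with ‖∇f(z_t) − v_t‖ ≤ κ for all 0 ≤ t ≤ T−1. Then (1/T) ∑_{t=1}^{T−1} G(z_t) ≤ (f(z_0) − inf_{y∈X} f(y))/(ηT) + 4LηD² + 2Dκ + Dκ (ln T)/T. -/

import Mathlib

open scoped RealInnerProductSpace

/-- The Frank–Wolfe (duality) gap of `f` over `X` at `x`:
`G(x) = sup_{w ∈ X} ⟪w − x, −∇f(x)⟫`. -/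
noncomputable def fwGap {d : ℕ} (f : EuclideanSpace ℝ (Fin d) → ℝ)
    (X : Set (EuclideanSpace ℝ (Fin d))) (x : EuclideanSpace ℝ (Fin d)) : ℝ :=
  sSup ((fun w => ⟪w - x, -gradient f x⟫) '' X)

noncomputable def auxH (t : ℕ) : ℝ := ∑ s ∈ Finset.range t, (1:ℝ)/((s:ℝ)+2)

lemma auxH_nonneg (t : ℕ) : 0 ≤ auxH t := by
  unfold auxH
  positivity

lemma auxH_succ (t : ℕ) : auxH (t+1) = auxH t + 1/((t:ℝ)+2) := by
  unfold auxH
  rw [Finset.sum_range_succ]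

lemma auxH_le (t : ℕ) : auxH t ≤ (t:ℝ)/2 := by
  induction t with
  | zero => simp [auxH]
  | succ n ih =>
    rw [auxH_succ]
    push_cast
    have h : (1:ℝ)/((n:ℝ)+2) ≤ 1/2 := by
      apply div_le_div_of_nonneg_left <;> [norm_num; norm_num; (push_cast; linarith [Nat.cast_nonneg (α := ℝ) n])]
    linarith

lemma auxH_mono : Monotone auxH := by
  apply monotone_nat_of_le_succ
  intro n
  rw [auxH_succ]
  have : (0:ℝ) < 1/((n:ℝ)+2) := by positivity
  linarith

lemma auxK (T : ℕ) : ∑ t ∈ Finset.range T, auxH (t+1) / (((t:ℝ)+1)*((t:ℝ)+2))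
    = 1 - (auxH T + 1)/((T:ℝ)+1) := by
  induction T with
  | zero => simp [auxH]
  | succ n ih =>
    rw [Finset.sum_range_succ, ih, auxH_succ]
    have h1 : ((n:ℝ)+1) ≠ 0 := by positivity
    have h2 : ((n:ℝ)+2) ≠ 0 := by positivity
    push_cast
    field_simp
    ring

lemma auxSq (T : ℕ) : ∑ t ∈ Finset.range T, (1:ℝ)/(((t:ℝ)+1)^2) ≤ 2 - 1/(T:ℝ) := by
  induction T with
  | zero => norm_num
  | succ n ih =>
    match n, ih with
    | 0, _ => norm_num [Finset.sum_range_succ]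
    | (m+1), ih =>
      rw [Finset.sum_range_succ]
      push_cast at ih ⊢
      have h1 : (0:ℝ) < (m:ℝ)+1 := by positivity
      have h2 : (0:ℝ) < (m:ℝ)+2 := by positivity
      have key : (1:ℝ)/((m:ℝ)+2)^2 ≤ 1/((m:ℝ)+1) - 1/((m:ℝ)+2) := by
        rw [div_sub_div _ _ (ne_of_gt h1) (ne_of_gt h2)]
        rw [div_le_div_iff₀ (by positivity) (by positivity)]
        nlinarith
      have e2 : ((m:ℝ)+1+1) = (m:ℝ)+2 := by ring
      rw [e2]
      linarith


theorem descent_lemma {d : ℕ} (f : EuclideanSpace ℝ (Fin d) → ℝ) (L : ℝ) (hL : 0 ≤ L)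
    (hdiff : Differentiable ℝ f)
    (hLip : ∀ u v', ‖gradient f u - gradient f v'‖ ≤ L * ‖u - v'‖)
    (a b : EuclideanSpace ℝ (Fin d)) :
    f b ≤ f a + ⟪gradient f a, b - a⟫ + L * ‖b - a‖ ^ 2 := by
  set g : ℝ → ℝ := fun s => f (a + s • (b - a)) with hg
  have hderiv : ∀ s : ℝ, HasDerivAt g (⟪gradient f (a + s • (b - a)), b - a⟫) s := by
    intro s
    have h1 : HasFDerivAt f ((InnerProductSpace.toDual ℝ _) (gradient f (a + s • (b - a))))
        (a + s • (b - a)) := (hdiff _).hasGradientAt.hasFDerivAt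
    have h2 : HasDerivAt (fun s : ℝ => a + s • (b - a)) (b - a) s := by
      simpa using ((hasDerivAt_id s).smul_const (b - a)).const_add a
    exact (h1.comp_hasDerivAt s h2)
  have hcont : ContinuousOn g (Set.Icc 0 1) :=
    ((hdiff.continuous).comp (by continuity)).continuousOn
  obtain ⟨c, hc, hceq⟩ := exists_hasDerivAt_eq_slope g
      (fun s => ⟪gradient f (a + s • (b - a)), b - a⟫) (by norm_num : (0:ℝ) < 1)
      hcont (fun s _ => hderiv s)
  have hg0 : g 0 = f a := by simp [hg]
  have hg1 : g 1 = f b := by simp [hg]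
  have key : f b - f a = ⟪gradient f (a + c • (b - a)), b - a⟫ := by
    rw [← hg0, ← hg1]
    have := hceq
    field_simp at this
    linarith [this]
  have hsplit : ⟪gradient f (a + c • (b - a)), b - a⟫
      = ⟪gradient f a, b - a⟫ + ⟪gradient f (a + c • (b - a)) - gradient f a, b - a⟫ := by
    rw [inner_sub_left]; ring
  have hCS : ⟪gradient f (a + c • (b - a)) - gradient f a, b - a⟫
      ≤ ‖gradient f (a + c • (b - a)) - gradient f a‖ * ‖b - a‖ :=
    real_inner_le_norm _ _
  have hlip' : ‖gradient f (a + c • (b - a)) - gradient f a‖ ≤ L * (c * ‖b - a‖) := by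
    have := hLip (a + c • (b - a)) a
    have h3 : a + c • (b - a) - a = c • (b - a) := by abel
    rw [h3] at this
    rw [norm_smul] at this
    simpa [abs_of_nonneg (le_of_lt hc.1)] using this
  have hc1 : c ≤ 1 := le_of_lt hc.2
  have hnn : (0:ℝ) ≤ ‖b - a‖ := norm_nonneg _
  nlinarith [hnn, mul_nonneg (mul_nonneg hL hnn) hnn, hc.1.le]


set_option maxHeartbeats 4000000 in
/-- Conditional convergence of momentum Frank–Wolfe with uniformly bounded
gradient-surrogate error (deterministic skeleton of the Acc-SZOFW analysis). -/
theorem momentum_fw_convergence_bounded_error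
    (d : ℕ) (hd : 1 ≤ d)
    (X : Set (EuclideanSpace ℝ (Fin d))) (hXne : X.Nonempty)
    (hXcomp : IsCompact X) (hXconv : Convex ℝ X)
    (D : ℝ) (hD : 0 < D)
    (hdiam : ∀ u ∈ X, ∀ v ∈ X, ‖u - v‖ ≤ D)
    (f : EuclideanSpace ℝ (Fin d) → ℝ)
    (L : ℝ) (hL : 0 < L)
    (hdiff : Differentiable ℝ f)
    (hLip : ∀ u v', ‖gradient f u - gradient f v'‖ ≤ L * ‖u - v'‖)
    (η : ℝ) (hη : 0 < η) (hη23 : η < 2 / 3)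
    (x y z w v : ℕ → EuclideanSpace ℝ (Fin d))
    (hx0 : x 0 = z 0) (hy0 : y 0 = z 0) (hz0 : z 0 ∈ X)
    (hwX : ∀ t, w t ∈ X)
    (hwopt : ∀ t, ∀ w' ∈ X, ⟪w', -(v t)⟫ ≤ ⟪w t, -(v t)⟫)
    (hxrec : ∀ t : ℕ, x (t + 1)
      = x t + ((1 + 1 / (((t : ℝ) + 1) * ((t : ℝ) + 2))) * η) • (w t - x t))
    (hyrec : ∀ t : ℕ, y (t + 1) = z t + η • (w t - z t))
    (hzrec : ∀ t : ℕ, z (t + 1)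
      = (1 - 1 / ((t : ℝ) + 2)) • y (t + 1) + (1 / ((t : ℝ) + 2)) • x (t + 1))
    (T : ℕ) (hT : 2 ≤ T)
    (κ : ℝ) (hκ : 0 ≤ κ)
    (herr : ∀ t : ℕ, t < T → ‖gradient f (z t) - v t‖ ≤ κ) :
    (1 / (T : ℝ)) * ∑ t ∈ Finset.Ico 1 T, fwGap f X (z t)
      ≤ (f (z 0) - sInf (f '' X)) / (η * T) + 4 * L * η * D ^ 2
        + 2 * D * κ + D * κ * Real.log T / T := by
  -- γ bounds
  have hγ01 : ∀ t : ℕ, 0 ≤ (1 + 1 / (((t : ℝ) + 1) * ((t : ℝ) + 2))) * η ∧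
      (1 + 1 / (((t : ℝ) + 1) * ((t : ℝ) + 2))) * η ≤ 1 := by
    intro t
    have h1 : (0:ℝ) < ((t:ℝ)+1) * ((t:ℝ)+2) := by positivity
    have h2 : (2:ℝ) ≤ ((t:ℝ)+1) * ((t:ℝ)+2) := by nlinarith [Nat.cast_nonneg (α := ℝ) t]
    have hθ : 1 / (((t : ℝ) + 1) * ((t : ℝ) + 2)) ≤ 1/2 := by
      rw [div_le_div_iff₀ h1 (by norm_num)]
      linarith
    have hθ0 : 0 ≤ 1 / (((t : ℝ) + 1) * ((t : ℝ) + 2)) := by positivity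
    constructor
    · positivity
    · nlinarith
  -- membership
  have hmem : ∀ t : ℕ, x t ∈ X ∧ y t ∈ X ∧ z t ∈ X := by
    intro t
    induction t with
    | zero => exact ⟨hx0 ▸ hz0, hy0 ▸ hz0, hz0⟩
    | succ n ih =>
      obtain ⟨hxX, hyX, hzX⟩ := ih
      have hγ := hγ01 n
      have hxX' : x (n+1) ∈ X := by
        have heq : x (n+1) = (1 - (1 + 1 / (((n : ℝ) + 1) * ((n : ℝ) + 2))) * η) • x n
            + ((1 + 1 / (((n : ℝ) + 1) * ((n : ℝ) + 2))) * η) • w n := by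
          rw [hxrec]; module
        rw [heq]
        exact hXconv hxX (hwX n) (by linarith [hγ.2]) hγ.1 (by ring)
      have hyX' : y (n+1) ∈ X := by
        have heq : y (n+1) = (1 - η) • z n + η • w n := by rw [hyrec]; module
        rw [heq]
        exact hXconv hzX (hwX n) (by linarith) (le_of_lt hη) (by ring)
      have hzX' : z (n+1) ∈ X := by
        rw [hzrec]
        have h1 : (0:ℝ) < (n:ℝ)+2 := by positivity
        have h2 : (0:ℝ) ≤ 1/((n:ℝ)+2) := by positivity
        have h3 : 1/((n:ℝ)+2) ≤ 1 := by
          rw [div_le_one h1]; linarith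
        exact hXconv hyX' hxX' (by linarith) h2 (by ring)
      exact ⟨hxX', hyX', hzX'⟩
  -- vector identities
  have hu : ∀ t : ℕ, x (t+1) - z (t+1)
      = ((((t:ℝ)+1)/((t:ℝ)+2)) * (1 - (1 + 1 / (((t : ℝ) + 1) * ((t : ℝ) + 2))) * η)) • (x t - z t)
      + (η / (((t:ℝ)+2)^2)) • (w t - z t) := by
    intro t
    have h1 : ((t:ℝ)+1) ≠ 0 := by positivity
    have h2 : ((t:ℝ)+2) ≠ 0 := by positivity
    rw [hzrec, hxrec, hyrec]
    match_scalars <;> field_simp <;> ring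
  have hzy : ∀ t : ℕ, z (t+1) - y (t+1) = (1/((t:ℝ)+1)) • (x (t+1) - z (t+1)) := by
    intro t
    have h1 : ((t:ℝ)+1) ≠ 0 := by positivity
    have h2 : ((t:ℝ)+2) ≠ 0 := by positivity
    rw [hzrec]
    match_scalars <;> field_simp <;> ring
  have hzz : ∀ t : ℕ, z (t+1) - z t = η • (w t - z t) + (1/((t:ℝ)+1)) • (x (t+1) - z (t+1)) := by
    intro t
    have h1 : ((t:ℝ)+1) ≠ 0 := by positivity
    have h2 : ((t:ℝ)+2) ≠ 0 := by positivity
    rw [hzrec, hyrec]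
    match_scalars <;> field_simp <;> ring
  -- norm bounds
  have hwz : ∀ t, ‖w t - z t‖ ≤ D := fun t => hdiam _ (hwX t) _ (hmem t).2.2
  have habd : ∀ t : ℕ, ‖x t - z t‖ ≤ η*D*auxH t/((t:ℝ)+1) := by
    intro t
    induction t with
    | zero => simp [hx0, auxH]
    | succ n ih =>
      have h1 : (0:ℝ) < (n:ℝ)+1 := by positivity
      have h2 : (0:ℝ) < (n:ℝ)+2 := by positivity
      have hγ := hγ01 n
      rw [hu n]
      refine le_trans (norm_add_le _ _) ?_
      rw [norm_smul, norm_smul, Real.norm_eq_abs, Real.norm_eq_abs,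
        abs_of_nonneg (mul_nonneg (by positivity) (by linarith [hγ.2]) : (0:ℝ) ≤ ((n:ℝ)+1)/((n:ℝ)+2) * (1 - (1 + 1 / (((n : ℝ) + 1) * ((n : ℝ) + 2))) * η)),
        abs_of_nonneg (by positivity : (0:ℝ) ≤ η / ((n:ℝ)+2)^2)]
      have hb1 : (((n:ℝ)+1)/((n:ℝ)+2) * (1 - (1 + 1 / (((n : ℝ) + 1) * ((n : ℝ) + 2))) * η)) * ‖x n - z n‖
          ≤ ((n:ℝ)+1)/((n:ℝ)+2) * (η*D*auxH n/((n:ℝ)+1)) := by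
        apply mul_le_mul _ ih (norm_nonneg _) (by positivity)
        have hc1 : (0:ℝ) ≤ ((n:ℝ)+1)/((n:ℝ)+2) := by positivity
        nlinarith [mul_nonneg hc1 hγ.1]
      have hb2 : η/((n:ℝ)+2)^2 * ‖w n - z n‖ ≤ η/((n:ℝ)+2)^2 * D :=
        mul_le_mul_of_nonneg_left (hwz n) (by positivity)
      have e : ((n:ℝ)+1)/((n:ℝ)+2) * (η*D*auxH n/((n:ℝ)+1)) + η/((n:ℝ)+2)^2 * D
          = η*D*auxH (n+1)/(((n:ℕ):ℝ)+1+1) := by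
        rw [auxH_succ]
        field_simp
        ring
      push_cast
      push_cast at e
      linarith
  have hahalf : ∀ t : ℕ, ‖x t - z t‖ ≤ η*D/2 := by
    intro t
    refine (habd t).trans ?_
    rw [div_le_iff₀ (by positivity : (0:ℝ) < (t:ℝ)+1)]
    have h1 := auxH_le t
    have h2 := auxH_nonneg t
    have h3 : (0:ℝ) ≤ (t:ℝ) := Nat.cast_nonneg t
    have hp : (0:ℝ) ≤ η*D := by positivity
    nlinarith [mul_le_mul_of_nonneg_left h1 hp]
  have hzzb : ∀ t : ℕ, ‖z (t+1) - z t‖ ≤ 2*η*D := by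
    intro t
    rw [hzz t]
    refine le_trans (norm_add_le _ _) ?_
    rw [norm_smul, norm_smul, Real.norm_eq_abs, Real.norm_eq_abs,
      abs_of_nonneg hη.le, abs_of_nonneg (by positivity : (0:ℝ) ≤ 1/((t:ℝ)+1))]
    have h1 : η * ‖w t - z t‖ ≤ η * D := mul_le_mul_of_nonneg_left (hwz t) hη.le
    have h2 : 1/((t:ℝ)+1) * ‖x (t+1) - z (t+1)‖ ≤ 1 * (η*D/2) := by
      apply mul_le_mul _ (hahalf (t+1)) (norm_nonneg _) (by norm_num)
      rw [div_le_one (by positivity)]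
      linarith [Nat.cast_nonneg (α := ℝ) t]
    nlinarith
  -- gap lemmas
  have hGapnn : ∀ t : ℕ, 0 ≤ fwGap f X (z t) := by
    intro t
    have hcont : Continuous (fun w' : EuclideanSpace ℝ (Fin d) => ⟪w' - z t, -gradient f (z t)⟫) :=
      Continuous.inner (continuous_id.sub continuous_const) continuous_const
    have hbdd : BddAbove ((fun w' => ⟪w' - z t, -gradient f (z t)⟫) '' X) :=
      (hXcomp.image hcont).bddAbove
    have hmemim : (0:ℝ) ∈ ((fun w' => ⟪w' - z t, -gradient f (z t)⟫) '' X) :=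
      ⟨z t, (hmem t).2.2, by simp⟩
    exact le_csSup hbdd hmemim
  have hGapub : ∀ t : ℕ, t < T → fwGap f X (z t) ≤ -⟪gradient f (z t), w t - z t⟫ + 2*(D*κ) := by
    intro t ht
    apply csSup_le (hXne.image _)
    rintro b ⟨w', hw', rfl⟩
    have hvg : ‖v t - gradient f (z t)‖ ≤ κ := by rw [norm_sub_rev]; exact herr t ht
    have h1 : ⟪w' - z t, -gradient f (z t)⟫
        = ⟪w' - z t, -(v t)⟫ + ⟪w' - z t, v t - gradient f (z t)⟫ := by
      rw [← inner_add_right]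
      congr 1
      abel
    have h2 : ⟪w' - z t, -(v t)⟫ ≤ ⟪w t - z t, -(v t)⟫ := by
      rw [inner_sub_left, inner_sub_left]
      linarith [hwopt t w' hw']
    have h3 : ⟪w' - z t, v t - gradient f (z t)⟫ ≤ D * κ :=
      le_trans (real_inner_le_norm _ _)
        (mul_le_mul (hdiam _ hw' _ (hmem t).2.2) hvg (norm_nonneg _) hD.le)
    have h4 : ⟪w t - z t, -(v t)⟫
        = ⟪w t - z t, -gradient f (z t)⟫ + ⟪w t - z t, gradient f (z t) - v t⟫ := by
      rw [← inner_add_right]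
      congr 1
      abel
    have h5 : ⟪w t - z t, gradient f (z t) - v t⟫ ≤ D * κ :=
      le_trans (real_inner_le_norm _ _)
        (mul_le_mul (hwz t) (herr t ht) (norm_nonneg _) hD.le)
    have h6 : ⟪w t - z t, -gradient f (z t)⟫ = -⟪gradient f (z t), w t - z t⟫ := by
      rw [inner_neg_right, real_inner_comm]
    linarith
  -- recursion for the max-inner-product quantity
  have hR : ∀ t : ℕ, t < T →
      ((t:ℝ)+2) * max ⟪gradient f (z (t+1)), x (t+1) - z (t+1)⟫ 0
      ≤ ((t:ℝ)+1) * max ⟪gradient f (z t), x t - z t⟫ 0 + 2*L*η^2*D^2*auxH t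
        + (η*κ*D + 2*L*η^2*D^2)/((t:ℝ)+2) := by
    intro t ht
    have h1 : (0:ℝ) < (t:ℝ)+1 := by positivity
    have h2 : (0:ℝ) < (t:ℝ)+2 := by positivity
    have hγ := hγ01 t
    have hc1 : (0:ℝ) ≤ ((t:ℝ)+1)/((t:ℝ)+2) := by positivity
    have hEnn : (0:ℝ) ≤ η*D*auxH t/((t:ℝ)+1) :=
      div_nonneg (mul_nonneg (by positivity) (auxH_nonneg t)) h1.le
    have h2L : (0:ℝ) ≤ 2*L*η*D := by positivity
    have hgg : ‖gradient f (z (t+1)) - gradient f (z t)‖ ≤ L*(2*η*D) :=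
      le_trans (hLip _ _) (mul_le_mul_of_nonneg_left (hzzb t) hL.le)
    have hgv : ‖gradient f (z (t+1)) - v t‖ ≤ 2*L*η*D + κ := by
      have e : gradient f (z (t+1)) - v t
          = (gradient f (z (t+1)) - gradient f (z t)) + (gradient f (z t) - v t) := by abel
      rw [e]
      refine le_trans (norm_add_le _ _) ?_
      linarith [herr t ht, hgg]
    have hs1 : ⟪gradient f (z (t+1)), x t - z t⟫
        ≤ ⟪gradient f (z t), x t - z t⟫ + 2*L*η*D*(η*D*auxH t/((t:ℝ)+1)) := by
      have e : ⟪gradient f (z (t+1)), x t - z t⟫ = ⟪gradient f (z t), x t - z t⟫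
          + ⟪gradient f (z (t+1)) - gradient f (z t), x t - z t⟫ := by
        rw [inner_sub_left]; ring
      rw [e]
      have hb := le_trans (real_inner_le_norm (gradient f (z (t+1)) - gradient f (z t)) (x t - z t))
        (mul_le_mul hgg (habd t) (norm_nonneg _) (by positivity))
      have e2 : L*(2*η*D)*(η*D*auxH t/((t:ℝ)+1)) = 2*L*η*D*(η*D*auxH t/((t:ℝ)+1)) := by ring
      linarith [e2 ▸ hb]
    have hs2 : ⟪gradient f (z (t+1)), w t - z t⟫ ≤ (κ + 2*L*η*D)*D := by
      have e : ⟪gradient f (z (t+1)), w t - z t⟫ = ⟪v t, w t - z t⟫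
          + ⟪gradient f (z (t+1)) - v t, w t - z t⟫ := by
        rw [inner_sub_left]; ring
      have hv0 : ⟪v t, w t - z t⟫ ≤ 0 := by
        have hopt := hwopt t (z t) (hmem t).2.2
        have e2 : ⟪v t, w t - z t⟫ = -(⟪w t, -(v t)⟫ - ⟪z t, -(v t)⟫) := by
          rw [inner_sub_right, inner_neg_right, inner_neg_right,
            real_inner_comm (w t) (v t), real_inner_comm (z t) (v t)]
          ring
        rw [e2]
        linarith
      have hb := le_trans (real_inner_le_norm (gradient f (z (t+1)) - v t) (w t - z t))
        (mul_le_mul hgv (hwz t) (norm_nonneg _) (by linarith))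
      rw [e]
      nlinarith [hv0, hb]
    have hmax0 : ⟪gradient f (z t), x t - z t⟫ ≤ max ⟪gradient f (z t), x t - z t⟫ 0 :=
      le_max_left _ _
    have hmaxnn : (0:ℝ) ≤ max ⟪gradient f (z t), x t - z t⟫ 0 := le_max_right _ _
    have hsign : (1 - (1 + 1/(((t:ℝ)+1)*((t:ℝ)+2)))*η) * ⟪gradient f (z (t+1)), x t - z t⟫
        ≤ max ⟪gradient f (z t), x t - z t⟫ 0 + 2*L*η*D*(η*D*auxH t/((t:ℝ)+1)) := by
      rcases le_or_gt ⟪gradient f (z (t+1)), x t - z t⟫ 0 with hneg | hpos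
      · have h0 := mul_nonpos_of_nonneg_of_nonpos (by linarith [hγ.2] : (0:ℝ) ≤ 1 - (1 + 1/(((t:ℝ)+1)*((t:ℝ)+2)))*η) hneg
        nlinarith [mul_nonneg h2L hEnn]
      · have h1a : (1 - (1 + 1/(((t:ℝ)+1)*((t:ℝ)+2)))*η) * ⟪gradient f (z (t+1)), x t - z t⟫
            ≤ 1 * ⟪gradient f (z (t+1)), x t - z t⟫ :=
          mul_le_mul_of_nonneg_right (by linarith [hγ.1]) hpos.le
        nlinarith [hs1]
    have hPrec : ⟪gradient f (z (t+1)), x (t+1) - z (t+1)⟫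
        = (((t:ℝ)+1)/((t:ℝ)+2) * (1 - (1 + 1/(((t:ℝ)+1)*((t:ℝ)+2)))*η))
            * ⟪gradient f (z (t+1)), x t - z t⟫
          + (η/((t:ℝ)+2)^2) * ⟪gradient f (z (t+1)), w t - z t⟫ := by
      rw [hu t, inner_add_right, real_inner_smul_right, real_inner_smul_right]
    have hRHS0nn : (0:ℝ) ≤ ((t:ℝ)+1)/((t:ℝ)+2) * (max ⟪gradient f (z t), x t - z t⟫ 0
        + 2*L*η*D*(η*D*auxH t/((t:ℝ)+1))) + (η/((t:ℝ)+2)^2) * ((κ + 2*L*η*D)*D) := by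
      have := mul_nonneg h2L hEnn
      have hk : (0:ℝ) ≤ (κ + 2*L*η*D)*D := mul_nonneg (by linarith) hD.le
      have hp2 : (0:ℝ) ≤ η/((t:ℝ)+2)^2 := by positivity
      nlinarith [mul_nonneg hc1 (by linarith : (0:ℝ) ≤ max ⟪gradient f (z t), x t - z t⟫ 0
        + 2*L*η*D*(η*D*auxH t/((t:ℝ)+1))), mul_nonneg hp2 hk]
    have hP' : ⟪gradient f (z (t+1)), x (t+1) - z (t+1)⟫
        ≤ ((t:ℝ)+1)/((t:ℝ)+2) * (max ⟪gradient f (z t), x t - z t⟫ 0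
          + 2*L*η*D*(η*D*auxH t/((t:ℝ)+1))) + (η/((t:ℝ)+2)^2) * ((κ + 2*L*η*D)*D) := by
      rw [hPrec]
      have hb1 : (((t:ℝ)+1)/((t:ℝ)+2) * (1 - (1 + 1/(((t:ℝ)+1)*((t:ℝ)+2)))*η))
            * ⟪gradient f (z (t+1)), x t - z t⟫
          ≤ ((t:ℝ)+1)/((t:ℝ)+2) * (max ⟪gradient f (z t), x t - z t⟫ 0
            + 2*L*η*D*(η*D*auxH t/((t:ℝ)+1))) := by
        rw [mul_assoc]
        exact mul_le_mul_of_nonneg_left hsign hc1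
      have hb2 : (η/((t:ℝ)+2)^2) * ⟪gradient f (z (t+1)), w t - z t⟫
          ≤ (η/((t:ℝ)+2)^2) * ((κ + 2*L*η*D)*D) :=
        mul_le_mul_of_nonneg_left hs2 (by positivity)
      linarith
    have hM' : max ⟪gradient f (z (t+1)), x (t+1) - z (t+1)⟫ 0
        ≤ ((t:ℝ)+1)/((t:ℝ)+2) * (max ⟪gradient f (z t), x t - z t⟫ 0
          + 2*L*η*D*(η*D*auxH t/((t:ℝ)+1))) + (η/((t:ℝ)+2)^2) * ((κ + 2*L*η*D)*D) :=
      max_le hP' hRHS0nn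
    have e3 : ((t:ℝ)+2) * (((t:ℝ)+1)/((t:ℝ)+2) * (max ⟪gradient f (z t), x t - z t⟫ 0
          + 2*L*η*D*(η*D*auxH t/((t:ℝ)+1))) + (η/((t:ℝ)+2)^2) * ((κ + 2*L*η*D)*D))
        = ((t:ℝ)+1) * max ⟪gradient f (z t), x t - z t⟫ 0 + 2*L*η^2*D^2*auxH t
          + (η*κ*D + 2*L*η^2*D^2)/((t:ℝ)+2) := by
      field_simp
    calc ((t:ℝ)+2) * max ⟪gradient f (z (t+1)), x (t+1) - z (t+1)⟫ 0
        ≤ ((t:ℝ)+2) * (((t:ℝ)+1)/((t:ℝ)+2) * (max ⟪gradient f (z t), x t - z t⟫ 0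
          + 2*L*η*D*(η*D*auxH t/((t:ℝ)+1))) + (η/((t:ℝ)+2)^2) * ((κ + 2*L*η*D)*D)) :=
          mul_le_mul_of_nonneg_left hM' h2.le
      _ = _ := e3
  -- cumulative bound
  have hRB : ∀ t : ℕ, t ≤ T → ((t:ℝ)+1) * max ⟪gradient f (z t), x t - z t⟫ 0
      ≤ 2*L*η^2*D^2 * (∑ s ∈ Finset.range t, auxH s) + (η*κ*D + 2*L*η^2*D^2) * auxH t := by
    intro t
    induction t with
    | zero =>
      intro _
      have e : x 0 - z 0 = 0 := by rw [hx0]; simp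
      rw [e]
      simp [auxH]
    | succ n ih =>
      intro hn1
      have hrec := hR n (by omega)
      have ihh := ih (by omega)
      rw [Finset.sum_range_succ, auxH_succ]
      simp only [Nat.cast_add, Nat.cast_one]
      have e : ((n:ℝ)+1+1) = (n:ℝ)+2 := by ring
      rw [e]
      have e2 : (η*κ*D + 2*L*η^2*D^2)/((n:ℝ)+2) = (η*κ*D + 2*L*η^2*D^2) * (1/((n:ℝ)+2)) := by
        ring
      rw [e2] at hrec
      linarith
  -- per-step inequality
  have hstep : ∀ t : ℕ, t < T →
      f (z (t+1)) + η * fwGap f X (z t) ≤ f (z t) + (2*η*κ*D + L*η^2*D^2)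
        + max ⟪gradient f (z (t+1)), x (t+1) - z (t+1)⟫ 0 / ((t:ℝ)+1)
        + 2*L*(η*D/2)^2/(((t:ℝ)+1)^2) := by
    intro t ht
    have h1 : (0:ℝ) < (t:ℝ)+1 := by positivity
    -- step A
    have hdA := descent_lemma f L hL.le hdiff hLip (z t) (y (t+1))
    have eyz : y (t+1) - z t = η • (w t - z t) := by rw [hyrec]; abel
    rw [eyz, real_inner_smul_right] at hdA
    have hnA : ‖η • (w t - z t)‖^2 ≤ η^2*D^2 := by
      rw [norm_smul, Real.norm_eq_abs, abs_of_nonneg hη.le, mul_pow]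
      have hw := hwz t
      have hsq : ‖w t - z t‖^2 ≤ D^2 := by nlinarith [norm_nonneg (w t - z t)]
      nlinarith [mul_le_mul_of_nonneg_left hsq (sq_nonneg η)]
    have hA : f (y (t+1)) ≤ f (z t) + η * ⟪gradient f (z t), w t - z t⟫ + L*(η^2*D^2) := by
      have := mul_le_mul_of_nonneg_left hnA hL.le
      linarith
    have hg := hGapub t ht
    have hgi : ⟪gradient f (z t), w t - z t⟫ ≤ -fwGap f X (z t) + 2*(D*κ) := by linarith
    have hA2 : f (y (t+1)) ≤ f (z t) - η * fwGap f X (z t) + 2*η*κ*D + L*η^2*D^2 := by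
      have hm := mul_le_mul_of_nonneg_left hgi hη.le
      have e : η*(-fwGap f X (z t) + 2*(D*κ)) = -(η*fwGap f X (z t)) + 2*η*κ*D := by ring
      rw [e] at hm
      linarith
    -- step B
    have hdB := descent_lemma f L hL.le hdiff hLip (y (t+1)) (z (t+1))
    have hsw : ⟪gradient f (y (t+1)), z (t+1) - y (t+1)⟫
        ≤ ⟪gradient f (z (t+1)), z (t+1) - y (t+1)⟫ + L * ‖z (t+1) - y (t+1)‖^2 := by
      have e : ⟪gradient f (y (t+1)), z (t+1) - y (t+1)⟫
          = ⟪gradient f (z (t+1)), z (t+1) - y (t+1)⟫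
            + ⟪gradient f (y (t+1)) - gradient f (z (t+1)), z (t+1) - y (t+1)⟫ := by
        rw [inner_sub_left]; ring
      rw [e]
      have hb := le_trans (real_inner_le_norm (gradient f (y (t+1)) - gradient f (z (t+1))) (z (t+1) - y (t+1)))
        (mul_le_mul (le_trans (hLip _ _) (le_of_eq (by rw [norm_sub_rev])))
          (le_refl ‖z (t+1) - y (t+1)‖) (norm_nonneg _) (by positivity))
      nlinarith [hb, sq_nonneg ‖z (t+1) - y (t+1)‖, norm_nonneg (z (t+1) - y (t+1))]
    have hinner : ⟪gradient f (z (t+1)), z (t+1) - y (t+1)⟫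
        ≤ max ⟪gradient f (z (t+1)), x (t+1) - z (t+1)⟫ 0 / ((t:ℝ)+1) := by
      rw [hzy t, real_inner_smul_right]
      have e : (1/((t:ℝ)+1)) * ⟪gradient f (z (t+1)), x (t+1) - z (t+1)⟫
          = ⟪gradient f (z (t+1)), x (t+1) - z (t+1)⟫/((t:ℝ)+1) := by ring
      rw [e]
      exact (div_le_div_iff_of_pos_right h1).mpr (le_max_left _ _)
    have hnB : ‖z (t+1) - y (t+1)‖^2 ≤ (η*D/2)^2/(((t:ℝ)+1)^2) := by
      have hyzn : ‖z (t+1) - y (t+1)‖ ≤ (η*D/2)/((t:ℝ)+1) := by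
        rw [hzy t, norm_smul, Real.norm_eq_abs, abs_of_nonneg (by positivity : (0:ℝ) ≤ 1/((t:ℝ)+1))]
        have := mul_le_mul_of_nonneg_left (hahalf (t+1)) (by positivity : (0:ℝ) ≤ 1/((t:ℝ)+1))
        have e : 1/((t:ℝ)+1) * (η*D/2) = (η*D/2)/((t:ℝ)+1) := by ring
        linarith [e ▸ this]
      have := pow_le_pow_left₀ (norm_nonneg _) hyzn 2
      rw [div_pow] at this
      exact this
    have h2LB := mul_le_mul_of_nonneg_left hnB (by positivity : (0:ℝ) ≤ 2*L)
    have e2 : 2*L*((η*D/2)^2/(((t:ℝ)+1)^2)) = 2*L*(η*D/2)^2/(((t:ℝ)+1)^2) := by ring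
    rw [e2] at h2LB
    linarith
  -- telescoping
  have htele : ∀ n : ℕ, n ≤ T →
      f (z n) + η * ∑ t ∈ Finset.range n, fwGap f X (z t)
      ≤ f (z 0) + ∑ t ∈ Finset.range n, ((2*η*κ*D + L*η^2*D^2)
        + max ⟪gradient f (z (t+1)), x (t+1) - z (t+1)⟫ 0 / ((t:ℝ)+1)
        + 2*L*(η*D/2)^2/(((t:ℝ)+1)^2)) := by
    intro n
    induction n with
    | zero => intro _; simp
    | succ m ih =>
      intro hm1
      rw [Finset.sum_range_succ, Finset.sum_range_succ]
      have h1 := hstep m (by omega)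
      have h2 := ih (by omega)
      linarith
  -- per-term bound for the momentum error series
  have hMbd : ∀ t : ℕ, t < T →
      max ⟪gradient f (z (t+1)), x (t+1) - z (t+1)⟫ 0 / ((t:ℝ)+1)
      ≤ L*η^2*D^2 + (η*κ*D + 2*L*η^2*D^2) * (auxH (t+1)/(((t:ℝ)+1)*((t:ℝ)+2))) := by
    intro t ht
    have h1 : (0:ℝ) < (t:ℝ)+1 := by positivity
    have h2 : (0:ℝ) < (t:ℝ)+2 := by positivity
    have hrb := hRB (t+1) (by omega)
    simp only [Nat.cast_add, Nat.cast_one] at hrb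
    have e0 : ((t:ℝ)+1+1) = (t:ℝ)+2 := by ring
    rw [e0] at hrb
    have hsum : ∑ s ∈ Finset.range (t+1), auxH s ≤ ((t:ℝ)+1) * auxH (t+1) := by
      calc ∑ s ∈ Finset.range (t+1), auxH s
          ≤ ∑ _s ∈ Finset.range (t+1), auxH (t+1) :=
            Finset.sum_le_sum (fun s hs => auxH_mono (le_of_lt (Finset.mem_range.mp hs)))
        _ = ((t:ℝ)+1) * auxH (t+1) := by
            rw [Finset.sum_const, Finset.card_range, nsmul_eq_mul]
            push_cast
            ring
    have hH : auxH (t+1) ≤ ((t:ℝ)+2)/2 := by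
      refine le_trans (auxH_le (t+1)) ?_
      push_cast
      linarith
    have hHnn := auxH_nonneg (t+1)
    have hMnn : (0:ℝ) ≤ max ⟪gradient f (z (t+1)), x (t+1) - z (t+1)⟫ 0 := le_max_right _ _
    have key : max ⟪gradient f (z (t+1)), x (t+1) - z (t+1)⟫ 0 * ((t:ℝ)+2)
        ≤ ((L*η^2*D^2 + (η*κ*D + 2*L*η^2*D^2) * (auxH (t+1)/(((t:ℝ)+1)*((t:ℝ)+2)))) * ((t:ℝ)+1))
          * ((t:ℝ)+2) := by
      have e : ((L*η^2*D^2 + (η*κ*D + 2*L*η^2*D^2) * (auxH (t+1)/(((t:ℝ)+1)*((t:ℝ)+2)))) * ((t:ℝ)+1))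
          * ((t:ℝ)+2) = L*η^2*D^2*(((t:ℝ)+1)*((t:ℝ)+2)) + (η*κ*D + 2*L*η^2*D^2)*auxH (t+1) := by
        field_simp
      rw [e]
      have p1 : 2*L*η^2*D^2 * (∑ s ∈ Finset.range (t+1), auxH s)
          ≤ 2*L*η^2*D^2 * (((t:ℝ)+1) * auxH (t+1)) :=
        mul_le_mul_of_nonneg_left hsum (by positivity)
      have p2 : 2*L*η^2*D^2 * (((t:ℝ)+1) * auxH (t+1)) ≤ L*η^2*D^2*(((t:ℝ)+1)*((t:ℝ)+2)) := by
        have h6 := mul_le_mul_of_nonneg_left hH (by positivity : (0:ℝ) ≤ 2*L*η^2*D^2*((t:ℝ)+1))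
        have e3 : 2*L*η^2*D^2*((t:ℝ)+1)*(((t:ℝ)+2)/2) = L*η^2*D^2*(((t:ℝ)+1)*((t:ℝ)+2)) := by
          ring
        linarith [e3 ▸ h6]
      linarith [hrb, p1, p2]
    rw [div_le_iff₀ h1]
    have e2 : (L*η^2*D^2 + (η*κ*D + 2*L*η^2*D^2) * (auxH (t+1)/(((t:ℝ)+1)*((t:ℝ)+2)))) * ((t:ℝ)+1)
        * ((t:ℝ)+2) = ((L*η^2*D^2 + (η*κ*D + 2*L*η^2*D^2)
          * (auxH (t+1)/(((t:ℝ)+1)*((t:ℝ)+2)))) * ((t:ℝ)+1)) * ((t:ℝ)+2) := by ring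
    exact le_of_mul_le_mul_right (by linarith [key]) h2
  -- bound on sum of momentum error terms
  have hsumM : ∑ t ∈ Finset.range T, max ⟪gradient f (z (t+1)), x (t+1) - z (t+1)⟫ 0 / ((t:ℝ)+1)
      ≤ (T:ℝ)*(L*η^2*D^2) + (η*κ*D + 2*L*η^2*D^2) * ((T:ℝ)/((T:ℝ)+1)) := by
    have hTpos : (0:ℝ) < (T:ℝ)+1 := by positivity
    calc ∑ t ∈ Finset.range T, max ⟪gradient f (z (t+1)), x (t+1) - z (t+1)⟫ 0 / ((t:ℝ)+1)
        ≤ ∑ t ∈ Finset.range T, (L*η^2*D^2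
            + (η*κ*D + 2*L*η^2*D^2) * (auxH (t+1)/(((t:ℝ)+1)*((t:ℝ)+2)))) :=
          Finset.sum_le_sum (fun t htt => hMbd t (Finset.mem_range.mp htt))
      _ = (T:ℝ)*(L*η^2*D^2) + (η*κ*D + 2*L*η^2*D^2)
            * ∑ t ∈ Finset.range T, auxH (t+1)/(((t:ℝ)+1)*((t:ℝ)+2)) := by
          rw [Finset.sum_add_distrib, Finset.sum_const, Finset.card_range, nsmul_eq_mul,
            ← Finset.mul_sum]
      _ = (T:ℝ)*(L*η^2*D^2) + (η*κ*D + 2*L*η^2*D^2) * (1 - (auxH T + 1)/((T:ℝ)+1)) := by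
          rw [auxK]
      _ ≤ (T:ℝ)*(L*η^2*D^2) + (η*κ*D + 2*L*η^2*D^2) * ((T:ℝ)/((T:ℝ)+1)) := by
          have hC : (0:ℝ) ≤ η*κ*D + 2*L*η^2*D^2 := by positivity
          have hq : 1 - (auxH T + 1)/((T:ℝ)+1) ≤ (T:ℝ)/((T:ℝ)+1) := by
            have h5 : (1:ℝ)/((T:ℝ)+1) ≤ (auxH T + 1)/((T:ℝ)+1) := by
              gcongr
              linarith [auxH_nonneg T]
            have e : 1 - 1/((T:ℝ)+1) = (T:ℝ)/((T:ℝ)+1) := by field_simp; ring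
            linarith
          nlinarith [mul_le_mul_of_nonneg_left hq hC]
  have hsumSq : ∑ t ∈ Finset.range T, 2*L*(η*D/2)^2/(((t:ℝ)+1)^2) ≤ L*η^2*D^2 := by
    calc ∑ t ∈ Finset.range T, 2*L*(η*D/2)^2/(((t:ℝ)+1)^2)
        = 2*L*(η*D/2)^2 * ∑ t ∈ Finset.range T, (1:ℝ)/(((t:ℝ)+1)^2) := by
          rw [Finset.mul_sum]
          exact Finset.sum_congr rfl (fun t _ => by ring)
      _ ≤ 2*L*(η*D/2)^2 * 2 := by
          refine mul_le_mul_of_nonneg_left ?_ (by positivity)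
          refine le_trans (auxSq T) ?_
          have : (0:ℝ) ≤ 1/(T:ℝ) := by positivity
          linarith
      _ = L*η^2*D^2 := by ring
  have hInf : sInf (f '' X) ≤ f (z T) :=
    csInf_le (hXcomp.image hdiff.continuous).bddBelow (Set.mem_image_of_mem f (hmem T).2.2)
  have hG0 : ∑ t ∈ Finset.range T, fwGap f X (z t)
      = fwGap f X (z 0) + ∑ t ∈ Finset.Ico 1 T, fwGap f X (z t) := by
    rw [Finset.range_eq_Ico, Finset.sum_eq_sum_Ico_succ_bot (by omega : 0 < T)]
  have hTpos : (0:ℝ) < (T:ℝ) := by exact_mod_cast (by omega : 0 < T)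
  have hT2 : (2:ℝ) ≤ (T:ℝ) := by exact_mod_cast hT
  have hlogT : (T:ℝ)/((T:ℝ)+1) ≤ Real.log T := by
    rcases eq_or_lt_of_le hT with h2 | h3
    · have hTe : T = 2 := h2.symm
      subst hTe
      have := Real.log_two_gt_d9
      norm_num
      linarith
    · have h3' : (3:ℕ) ≤ T := h3
      have hlog1 : (1:ℝ) ≤ Real.log T := by
        rw [Real.le_log_iff_exp_le hTpos]
        calc Real.exp 1 ≤ 2.7182818286 := le_of_lt Real.exp_one_lt_d9
          _ ≤ 3 := by norm_num
          _ ≤ (T:ℝ) := by exact_mod_cast h3'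
      have hfr : (T:ℝ)/((T:ℝ)+1) ≤ 1 := by
        rw [div_le_one (by linarith)]
        linarith
      linarith
  -- final assembly
  have htel := htele T le_rfl
  have hsplitE : ∑ t ∈ Finset.range T, ((2*η*κ*D + L*η^2*D^2)
        + max ⟪gradient f (z (t+1)), x (t+1) - z (t+1)⟫ 0 / ((t:ℝ)+1)
        + 2*L*(η*D/2)^2/(((t:ℝ)+1)^2))
      = (T:ℝ)*(2*η*κ*D + L*η^2*D^2)
        + ∑ t ∈ Finset.range T, max ⟪gradient f (z (t+1)), x (t+1) - z (t+1)⟫ 0 / ((t:ℝ)+1)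
        + ∑ t ∈ Finset.range T, 2*L*(η*D/2)^2/(((t:ℝ)+1)^2) := by
    rw [Finset.sum_add_distrib, Finset.sum_add_distrib, Finset.sum_const, Finset.card_range,
      nsmul_eq_mul]
  have hCsplit : (η*κ*D + 2*L*η^2*D^2) * ((T:ℝ)/((T:ℝ)+1))
      ≤ η*κ*D*Real.log T + 2*L*η^2*D^2 := by
    have hfr1 : (T:ℝ)/((T:ℝ)+1) ≤ 1 := by
      rw [div_le_one (by linarith)]
      linarith
    have b1 : η*κ*D * ((T:ℝ)/((T:ℝ)+1)) ≤ η*κ*D*Real.log T :=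
      mul_le_mul_of_nonneg_left hlogT (by positivity)
    have b2 : 2*L*η^2*D^2 * ((T:ℝ)/((T:ℝ)+1)) ≤ 2*L*η^2*D^2 :=
      le_trans (mul_le_mul_of_nonneg_left hfr1 (by positivity)) (by linarith [le_refl (2*L*η^2*D^2)] )
    nlinarith [b1, b2]
  have hmain : η * ∑ t ∈ Finset.Ico 1 T, fwGap f X (z t)
      ≤ (f (z 0) - sInf (f '' X)) + 4*L*η^2*D^2*(T:ℝ) + 2*η*κ*D*(T:ℝ) + η*κ*D*Real.log T := by
    have hG0nn := hGapnn 0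
    have hL4 : (T:ℝ)*(L*η^2*D^2) + (T:ℝ)*(L*η^2*D^2) + 2*L*η^2*D^2 + L*η^2*D^2
        ≤ 4*L*η^2*D^2*(T:ℝ) := by
      have hp : (0:ℝ) ≤ L*η^2*D^2 := by positivity
      nlinarith [mul_le_mul_of_nonneg_left hT2 hp]
    rw [hsplitE] at htel
    rw [hG0] at htel
    have hη0 : 0 ≤ η := hη.le
    nlinarith [htel, hsumM, hsumSq, hInf, hCsplit, mul_nonneg hη0 hG0nn]
  -- conclude
  have hBdg : ∑ t ∈ Finset.Ico 1 T, fwGap f X (z t)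
      ≤ (T:ℝ) * ((f (z 0) - sInf (f '' X)) / (η * T) + 4 * L * η * D ^ 2
        + 2 * D * κ + D * κ * Real.log T / T) := by
    have hexp : η * ((T:ℝ) * ((f (z 0) - sInf (f '' X)) / (η * T) + 4 * L * η * D ^ 2
        + 2 * D * κ + D * κ * Real.log T / T))
        = (f (z 0) - sInf (f '' X)) + 4*L*η^2*D^2*(T:ℝ) + 2*η*κ*D*(T:ℝ) + η*κ*D*Real.log T := by
      field_simp
    have := hmain
    rw [← hexp] at this
    exact le_of_mul_le_mul_left this hη
  have e1T : (1/(T:ℝ)) * ∑ t ∈ Finset.Ico 1 T, fwGap f X (z t)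
      = (∑ t ∈ Finset.Ico 1 T, fwGap f X (z t))/(T:ℝ) := by ring
  rw [e1T, div_le_iff₀ hTpos]
  calc ∑ t ∈ Finset.Ico 1 T, fwGap f X (z t)
      ≤ (T:ℝ) * ((f (z 0) - sInf (f '' X)) / (η * T) + 4 * L * η * D ^ 2
        + 2 * D * κ + D * κ * Real.log T / T) := hBdg
    _ = ((f (z 0) - sInf (f '' X)) / (η * T) + 4 * L * η * D ^ 2
        + 2 * D * κ + D * κ * Real.log T / T) * (T:ℝ) := by ring
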